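/- If m is a nonnegative integer and c is a rational number with c ≠ 10 satisfying m = c(5c+22)/(10-c), then there exists a nonnegative integer s with s² = m² + 244m + 484, i.e. s² + 120² = (m+122)². -/

import Mathlib

/-- If `m` is a nonnegative integer and `c ≠ 10` is rational with
`m = c(5c+22)/(10-c)`, then the discriminant quantity `m² + 244m + 484`
is a perfect square `s²`, i.e. `s² + 120² = (m+122)²`. -/
theorem discriminant_is_square (m : ℕ) (c : ℚ) (hc : c ≠ 10)
    (h : (m : ℚ) = c * (5 * c + 22) / (10 - c)) :
    ∃ s : ℕ, s ^ 2 = m ^ 2 + 244 * m + 484 ∧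
      s ^ 2 + 120 ^ 2 = (m + 122) ^ 2 := by
  have hne : (10 : ℚ) - c ≠ 0 := by
    intro h0
    exact hc (by linarith [sub_eq_zero.mp h0])
  have h' : (m : ℚ) * (10 - c) = c * (5 * c + 22) := by
    field_simp at h
    linarith [h]
  set q : ℚ := 10 * c + 22 + m with hq
  have key : q ^ 2 = ((m ^ 2 + 244 * m + 484 : ℕ) : ℚ) := by
    push_cast
    linear_combination (-20) * h'
  have hden : q.den = 1 := by
    have h2 : (q ^ 2).den = 1 := by rw [key]; exact Rat.den_natCast _
    have h3 := q.den_pow 2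
    rw [h2] at h3
    nlinarith [q.pos, h3.symm]
  have hint : (q.num : ℚ) = q := by
    conv_rhs => rw [← Rat.num_div_den q, hden]
    push_cast
    ring
  have hz : q.num ^ 2 = ((m ^ 2 + 244 * m + 484 : ℕ) : ℤ) := by
    have : (q.num : ℚ) ^ 2 = ((m ^ 2 + 244 * m + 484 : ℕ) : ℚ) := by rw [hint]; exact key
    exact_mod_cast this
  have h1 : q.num.natAbs ^ 2 = m ^ 2 + 244 * m + 484 := by
    have := congrArg Int.natAbs hz
    rw [Int.natAbs_pow, Int.natAbs_natCast] at this; exact this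
  exact ⟨q.num.natAbs, h1, by rw [h1]; ring⟩
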